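/- For fixed k and n-k, the cylindric Schur functions s_{λ/d/∅}(x), over all cylindric shapes λ/d/∅ that are subposets of the cylinder C_{k,n-k}, are linearly independent in the ring of symmetric functions. -/

import Mathlib

open scoped Classical
open Relation

noncomputable section

/-- Formal power series in countably many variables `x_0, x_1, ...` over `ℚ`. -/
abbrev FPS := MvPowerSeries ℕ ℚ

/-- A partition, encoded as a weakly decreasing, eventually-zero function giving part sizes. -/
def IsPtn (p : ℕ → ℕ) : Prop := Antitone p ∧ ∃ N, p N = 0

/-- The Young diagram (set of cells `(row, column)`, zero-indexed) of `p`. -/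
def cells (p : ℕ → ℕ) : Set (ℕ × ℕ) := {c | c.2 < p c.1}

/-- The conjugate partition. -/
def conjPtn (p : ℕ → ℕ) : ℕ → ℕ := fun j => Nat.card {i : ℕ // j < p i}

/-- `p` fits in a `k × w` box: at most `k` parts, each of size at most `w`. -/
def FitsBox (p : ℕ → ℕ) (k w : ℕ) : Prop := p 0 ≤ w ∧ p k = 0

/-- Generating function counting fillings `T` of a set `S` of boxes satisfying a predicate `Ok`,
weighted by content: the coefficient of `∏ x_v^{e v}` is the number of admissible fillings with
exactly `e v` boxes of `S` labelled `v`. -/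
def tabSeries {X : Type} (S : Set X) (Ok : (X → ℕ) → Prop) : FPS :=
  fun e => (Nat.card {T : X → ℕ //
    Ok T ∧ (∀ x, x ∉ S → T x = 0) ∧ ∀ v, Nat.card {x : X // x ∈ S ∧ T x = v} = e v} : ℚ)

/-- Semistandardness for fillings of a set of cells in `ℕ × ℕ`:
weakly increasing along rows, strictly increasing down columns. -/
def RowColOk (S : Set (ℕ × ℕ)) (T : ℕ × ℕ → ℕ) : Prop :=
  (∀ r c, (r, c) ∈ S → (r, c+1) ∈ S → T (r, c) ≤ T (r, c+1)) ∧
  (∀ r c, (r, c) ∈ S → (r+1, c) ∈ S → T (r, c) < T (r+1, c))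

/-- The skew Schur function `s_{lam/mu}` as the generating function of semistandard skew tableaux. -/
def skewSchur (lam mu : ℕ → ℕ) : FPS :=
  tabSeries (cells lam \ cells mu) (RowColOk (cells lam \ cells mu))

/-- The Schur function `s_lam`. -/
def schur (lam : ℕ → ℕ) : FPS := skewSchur lam (fun _ => 0)

/-- A symmetric function is Schur-positive if it is a non-negative linear combination of
Schur functions. -/
def IsSchurPos (f : FPS) : Prop :=
  ∃ (S : Finset (ℕ → ℕ)) (c : (ℕ → ℕ) → ℚ),
    (∀ p ∈ S, IsPtn p) ∧ (∀ p ∈ S, 0 ≤ c p) ∧ f = ∑ p ∈ S, c p • schur p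

/-- The cylinder `C_{vu} = ℤ² / (-u,v)ℤ`. -/
abbrev Cyl (u v : ℕ) := (ℤ × ℤ) ⧸ AddSubgroup.zmultiples ((-(u : ℤ), (v : ℤ)) : ℤ × ℤ)

/-- The quotient map onto the cylinder. -/
def cmk (u v : ℕ) (a : ℤ × ℤ) : Cyl u v := QuotientAddGroup.mk a

/-- `y` is the right neighbour of `x` in its row (a weak edge of the cylindric poset). -/
def rowAdj (u v : ℕ) (x y : Cyl u v) : Prop :=
  ∃ a : ℤ × ℤ, x = cmk u v a ∧ y = cmk u v (a.1 + 1, a.2)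

/-- `y` is the next element above `x` in its column (a strict edge of the cylindric poset). -/
def colAdj (u v : ℕ) (x y : Cyl u v) : Prop :=
  ∃ a : ℤ × ℤ, x = cmk u v a ∧ y = cmk u v (a.1, a.2 + 1)

/-- The partial order on the cylinder generated by the row and column steps. -/
def cle (u v : ℕ) (x y : Cyl u v) : Prop :=
  ∃ a b : ℤ × ℤ, x = cmk u v a ∧ y = cmk u v b ∧ a.1 ≤ b.1 ∧ a.2 ≤ b.2

/-- A cylindric skew shape: a finite convex subposet of the cylinder. -/
def IsCylShape (u v : ℕ) (C : Set (Cyl u v)) : Prop :=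
  C.Finite ∧ ∀ x y z, cle u v x y → cle u v y z → x ∈ C → z ∈ C → y ∈ C

/-- Semistandardness for cylindric tableaux: weakly increasing along rows,
strictly increasing along columns. -/
def CylOk (u v : ℕ) (C : Set (Cyl u v)) (T : Cyl u v → ℕ) : Prop :=
  (∀ x y, x ∈ C → y ∈ C → rowAdj u v x y → T x ≤ T y) ∧
  (∀ x y, x ∈ C → y ∈ C → colAdj u v x y → T x < T y)

/-- The cylindric skew Schur function of a cylindric skew shape `C`. -/
def cylSchur (u v : ℕ) (C : Set (Cyl u v)) : FPS := tabSeries C (CylOk u v C)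

/-- Edgewise adjacency in `ℕ × ℕ`. -/
def adjN (a b : ℕ × ℕ) : Prop :=
  b = (a.1 + 1, a.2) ∨ a = (b.1 + 1, b.2) ∨ b = (a.1, a.2 + 1) ∨ a = (b.1, b.2 + 1)

/-- A ribbon: a nonempty edgewise connected set of cells with no `2 × 2` block. -/
def IsRibbon (S : Set (ℕ × ℕ)) : Prop :=
  S.Nonempty ∧
  (∀ a b, a ∈ S → b ∈ S → Relation.ReflTransGen (fun p q => q ∈ S ∧ adjN p q) a b) ∧
  ¬ ∃ a : ℕ × ℕ, a ∈ S ∧ (a.1 + 1, a.2) ∈ S ∧ (a.1, a.2 + 1) ∈ S ∧ (a.1 + 1, a.2 + 1) ∈ S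

/-- `sigma` is obtained from `tau` by adding one `n`-ribbon. -/
def IsRibbonAdd (n : ℕ) (tau sigma : ℕ → ℕ) : Prop :=
  (∀ i, tau i ≤ sigma i) ∧ IsPtn sigma ∧
  Nat.card ↥(cells sigma \ cells tau) = n ∧ IsRibbon (cells sigma \ cells tau)

/-- The width (number of non-empty columns) of the skew shape `sigma/tau`. -/
def ribbonWidth (tau sigma : ℕ → ℕ) : ℕ :=
  Nat.card {c : ℕ // ∃ r, (r, c) ∈ cells sigma \ cells tau}

/-- `tau` is obtained from `lam` by adding `d` `n`-ribbons. -/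
def AddsRibbons (n d : ℕ) (lam tau : ℕ → ℕ) : Prop :=
  ∃ f : ℕ → ℕ → ℕ, f 0 = lam ∧ f d = tau ∧ ∀ i < d, IsRibbonAdd n (f i) (f (i + 1))

/-- The sign `ε(tau/lam) = (-1)^{∑ (n-k-width)}` over any chain of `d` `n`-ribbon additions
from `lam` to `tau` (the value is independent of the chain). -/
def epsSign (n k d : ℕ) (lam tau : ℕ → ℕ) : ℚ :=
  if h : ∃ f : ℕ → ℕ → ℕ, f 0 = lam ∧ f d = tau ∧ ∀ i < d, IsRibbonAdd n (f i) (f (i + 1)) then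
    (-1 : ℚ) ^ (∑ i ∈ Finset.range d, (n - k - ribbonWidth (h.choose i) (h.choose (i + 1))))
  else 0

/-- Conjugate description of adding one `n`-ribbon running along the whole top of a shape
(starting in the rightmost column `n-k` and ending in column `1`). -/
def fullRibbonConjStep (n k : ℕ) (c : ℕ → ℕ) : ℕ → ℕ :=
  fun i => if i = 0 then c (n - k - 1) + k + 1 else if i < n - k then c (i - 1) + 1 else 0

/-- The outer partition `Λ = lam^{[d]}`, obtained from `lam` by adding `d` full `n`-ribbons. -/
def outerShape (n k d : ℕ) (lam : ℕ → ℕ) : ℕ → ℕ :=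
  conjPtn ((fullRibbonConjStep n k)^[d] (conjPtn lam))

/-- Embedding of a cell `(row, col)` into the cylinder `C_{k,n-k}`. -/
def toCyl (n k : ℕ) (rc : ℕ × ℕ) : Cyl (n - k) k := cmk (n - k) k ((rc.2 : ℤ), (rc.1 : ℤ))

/-- The cylindric skew shape `lam/d/mu` as a subset of the cylinder `C_{k,n-k}`. -/
def ldmShape (n k d : ℕ) (lam mu : ℕ → ℕ) : Set (Cyl (n - k) k) :=
  toCyl n k '' (cells (outerShape n k d lam) \ cells mu)

/-- Conditions for `lam/d/mu` to describe a genuine cylindric skew shape in `C_{k,n-k}`: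
`lam ⊆ k × (n-k)` and `mu` a partition compatible with the cylinder and contained in `Λ`. -/
def ValidLDM (n k d : ℕ) (lam mu : ℕ → ℕ) : Prop :=
  IsPtn lam ∧ FitsBox lam k (n - k) ∧ IsPtn mu ∧ mu 0 ≤ n - k ∧
  conjPtn mu 0 ≤ conjPtn mu (n - k - 1) + k ∧ ∀ i, mu i ≤ outerShape n k d lam i

/-- Restriction of a power series to the first `N` variables (set `x_i = 0` for `i ≥ N`). -/
def restrictVars (N : ℕ) (f : FPS) : FPS :=
  fun e => if ∀ i ∈ e.support, i < N then MvPowerSeries.coeff e f else 0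

/-- Schur-positivity in `N` variables. -/
def SchurPosN (N : ℕ) (f : FPS) : Prop :=
  ∃ (S : Finset (ℕ → ℕ)) (c : (ℕ → ℕ) → ℚ),
    (∀ p ∈ S, IsPtn p) ∧ (∀ p ∈ S, 0 ≤ c p) ∧
    f = ∑ p ∈ S, c p • restrictVars N (schur p)

namespace Aux


lemma conj_eq_ncard (p : ℕ → ℕ) (j : ℕ) : conjPtn p j = {i | j < p i}.ncard := by
  rw [conjPtn, ← Nat.card_coe_set_eq]; rfl

/-- a finite downward-closed set of naturals is an initial segment -/
lemma down_closed_eq_Iio (S : Set ℕ) (hfin : S.Finite)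
    (hdc : ∀ i j, i ≤ j → j ∈ S → i ∈ S) : S = Set.Iio S.ncard := by
  ext i
  simp only [Set.mem_Iio]
  constructor
  · intro hi
    have hsub : Set.Iic i ⊆ S := fun l hl => hdc l i hl hi
    have h1 := Set.ncard_le_ncard hsub hfin
    have h2 : (Set.Iic i).ncard = i + 1 := by
      have : Set.Iic i = Set.Iio (i+1) := by ext x; simp [Nat.lt_succ_iff]
      rw [this, ← Finset.coe_range (i+1), Set.ncard_coe_finset, Finset.card_range]
    omega
  · intro hi
    by_contra hni
    have hsub : S ⊆ Set.Iio i := by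
      intro l hl
      simp only [Set.mem_Iio]
      by_contra hli
      exact hni (hdc i l (by omega) hl)
    have h1 := Set.ncard_le_ncard hsub (Set.finite_Iio i)
    have h2 : (Set.Iio i).ncard = i := by
      rw [← Finset.coe_range i, Set.ncard_coe_finset, Finset.card_range]
    omega

lemma ncard_Iio (m : ℕ) : (Set.Iio m).ncard = m := by
  rw [← Finset.coe_range m, Set.ncard_coe_finset, Finset.card_range]

/-- for `p` vanishing from `N` on, the conjugate's defining sets are finite -/
lemma conj_set_finite (p : ℕ → ℕ) (N : ℕ) (hN : ∀ i, N ≤ i → p i = 0) (j : ℕ) :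
    {i | j < p i}.Finite := by
  apply (Set.finite_Iio N).subset
  intro i hi
  simp only [Set.mem_setOf_eq] at hi
  simp only [Set.mem_Iio]
  by_contra h
  rw [hN i (by omega)] at hi; omega

lemma conj_set_eq (p : ℕ → ℕ) (hp : Antitone p) (N : ℕ) (hN : ∀ i, N ≤ i → p i = 0) (j : ℕ) :
    {i | j < p i} = Set.Iio (conjPtn p j) := by
  rw [conj_eq_ncard]
  exact down_closed_eq_Iio _ (conj_set_finite p N hN j)
    (fun i l hil hl => lt_of_lt_of_le hl (hp hil))

lemma conj_lt_iff (p : ℕ → ℕ) (hp : Antitone p) (N : ℕ) (hN : ∀ i, N ≤ i → p i = 0)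
    (i j : ℕ) : i < conjPtn p j ↔ j < p i := by
  rw [← Set.mem_Iio, ← conj_set_eq p hp N hN j]; rfl

lemma conj_antitone (p : ℕ → ℕ) (N : ℕ) (hN : ∀ i, N ≤ i → p i = 0) : Antitone (conjPtn p) := by
  intro a b hab
  rw [conj_eq_ncard, conj_eq_ncard]
  refine Set.ncard_le_ncard ?_ (conj_set_finite p N hN a)
  intro i hi
  simp only [Set.mem_setOf_eq] at hi ⊢
  omega

lemma conj_vanish (p : ℕ → ℕ) (hp : Antitone p) (j : ℕ) (hj : p 0 ≤ j) : conjPtn p j = 0 := by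
  rw [conj_eq_ncard]
  convert Set.ncard_empty ℕ
  ext i; simp only [Set.mem_setOf_eq, Set.mem_empty_iff_false, iff_false, not_lt]
  exact le_trans (hp (Nat.zero_le i)) hj

lemma conj_conj (p : ℕ → ℕ) (hp : Antitone p) (N : ℕ) (hN : ∀ i, N ≤ i → p i = 0) :
    conjPtn (conjPtn p) = p := by
  funext i
  rw [conj_eq_ncard]
  have : {j | i < conjPtn p j} = Set.Iio (p i) := by
    ext j
    rw [Set.mem_setOf_eq, conj_lt_iff p hp N hN, Set.mem_Iio]
  rw [this, ncard_Iio]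


/-- fiberwise counting: number of elements with value `≤ v` -/
lemma sum_fiber_le {X : Type} (S : Set X) (hS : S.Finite) (f : X → ℕ) (g : ℕ → ℕ)
    (hfib : ∀ v, {x | x ∈ S ∧ f x = v}.ncard = g v) (v : ℕ) :
    {x | x ∈ S ∧ f x ≤ v}.ncard = ∑ w ∈ Finset.range (v+1), g w := by
  induction v with
  | zero =>
    rw [Finset.sum_range_one, ← hfib 0]
    congr 1; ext x; simp [Nat.le_zero]
  | succ v ih =>
    rw [Finset.sum_range_succ, ← ih, ← hfib (v+1)]
    rw [← Set.ncard_union_eq ?hd ?h1 ?h2]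
    case hd =>
      rw [Set.disjoint_left]; rintro x ⟨_, hx⟩ ⟨_, hx'⟩; omega
    case h1 => exact hS.subset (fun x hx => hx.1)
    case h2 => exact hS.subset (fun x hx => hx.1)
    congr 1; ext x
    simp only [Set.mem_setOf_eq, Set.mem_union]
    constructor
    · rintro ⟨h1, h2⟩
      rcases Nat.lt_or_ge (f x) (v+1) with h | h
      · exact Or.inl ⟨h1, by omega⟩
      · exact Or.inr ⟨h1, by omega⟩
    · rintro (⟨h1, h2⟩ | ⟨h1, h2⟩) <;> exact ⟨h1, by omega⟩

lemma ncard_eq_sum_fiber {X : Type} (S : Set X) (hS : S.Finite) (f : X → ℕ) (g : ℕ → ℕ)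
    (hfib : ∀ v, {x | x ∈ S ∧ f x = v}.ncard = g v) (M : ℕ) (hM : ∀ x ∈ S, f x ≤ M) :
    S.ncard = ∑ w ∈ Finset.range (M+1), g w := by
  rw [← sum_fiber_le S hS f g hfib M]
  congr 1; ext x
  simp only [Set.mem_setOf_eq]
  exact ⟨fun h => ⟨h, hM x h⟩, fun h => h.1⟩

lemma row_fiber (p : ℕ → ℕ) (v : ℕ) : {a | a ∈ cells p ∧ a.1 = v}.ncard = p v := by
  have : {a | a ∈ cells p ∧ a.1 = v} = (fun c => (v, c)) '' Set.Iio (p v) := by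
    ext a
    simp only [Set.mem_setOf_eq, cells, Set.mem_image, Set.mem_Iio]
    constructor
    · rintro ⟨h1, h2⟩
      refine ⟨a.2, ?_, ?_⟩
      · rw [← h2]; exact h1
      · rw [← h2]
    · rintro ⟨c, hc, rfl⟩; exact ⟨hc, rfl⟩
  rw [this, Set.ncard_image_of_injective _ (fun a b hab => by simpa using hab), ncard_Iio]

lemma cells_finite (p : ℕ → ℕ) (N : ℕ) (hN : ∀ i, N ≤ i → p i = 0) (hb : ∀ i, p i ≤ N) :
    (cells p).Finite := by
  apply ((Set.finite_Iio N).prod (Set.finite_Iio N)).subset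
  rintro ⟨r, c⟩ h
  simp only [cells, Set.mem_setOf_eq] at h
  constructor
  · simp only [Set.mem_Iio]
    by_contra hr
    rw [hN r (by omega)] at h; omega
  · simp only [Set.mem_Iio]
    exact lt_of_lt_of_le h (hb r)

/-- partial row sums of the diagram -/
lemma cells_partial (p : ℕ → ℕ) (hfin : (cells p).Finite) (v : ℕ) :
    {a | a ∈ cells p ∧ a.1 ≤ v}.ncard = ∑ w ∈ Finset.range (v+1), p w :=
  sum_fiber_le (cells p) hfin Prod.fst p (row_fiber p) v

lemma cells_total (p : ℕ → ℕ) (hfin : (cells p).Finite) (M : ℕ)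
    (hM : ∀ i, M < i → p i = 0) :
    (cells p).ncard = ∑ w ∈ Finset.range (M+1), p w := by
  refine ncard_eq_sum_fiber (cells p) hfin Prod.fst p (row_fiber p) M ?_
  intro a ha
  by_contra h
  have := hM a.1 (by omega)
  simp only [cells, Set.mem_setOf_eq] at ha
  omega



lemma cmk_eq_iff (u v : ℕ) (a b : ℤ × ℤ) :
    cmk u v a = cmk u v b ↔ ∃ z : ℤ, b.1 = a.1 - z * u ∧ b.2 = a.2 + z * v := by
  rw [cmk, cmk, QuotientAddGroup.eq]
  rw [AddSubgroup.mem_zmultiples_iff]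
  constructor
  · rintro ⟨z, hz⟩
    refine ⟨z, ?_, ?_⟩
    · have := congrArg Prod.fst hz
      simp only [Prod.smul_fst, smul_eq_mul, Prod.fst_add, Prod.fst_neg] at this ⊢
      push_cast at this ⊢
      linarith [this]
    · have := congrArg Prod.snd hz
      simp only [Prod.smul_snd, smul_eq_mul, Prod.snd_add, Prod.snd_neg] at this
      linarith [this]
  · rintro ⟨z, h1, h2⟩
    refine ⟨z, ?_⟩
    ext
    · simp only [Prod.smul_fst, smul_eq_mul, Prod.fst_add, Prod.fst_neg]
      linarith [h1]
    · simp only [Prod.smul_snd, smul_eq_mul, Prod.snd_add, Prod.snd_neg]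
      linarith [h2]

lemma cmk_shift (u v : ℕ) {a b : ℤ × ℤ} (h : cmk u v a = cmk u v b) (r : ℤ × ℤ) :
    cmk u v (a.1 + r.1, a.2 + r.2) = cmk u v (b.1 + r.1, b.2 + r.2) := by
  rw [cmk_eq_iff] at h ⊢
  obtain ⟨z, h1, h2⟩ := h
  exact ⟨z, by simp only []; linarith, by simp only []; linarith⟩

variable {n k : ℕ}

lemma toCyl_eq_iff (hw : 0 < n - k) {p : ℕ → ℕ} (hp : ∀ r, p r ≤ n - k)
    {a b : ℕ × ℕ} (ha : a ∈ cells p) (hb : b ∈ cells p) :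
    toCyl n k a = toCyl n k b ↔ a = b := by
  constructor
  · intro h
    rw [toCyl, toCyl, cmk_eq_iff] at h
    obtain ⟨z, h1, h2⟩ := h
    simp only [] at h1 h2
    have ha2 : a.2 < n - k := lt_of_lt_of_le ha (hp a.1)
    have hb2 : b.2 < n - k := lt_of_lt_of_le hb (hp b.1)
    have hu : (1:ℤ) ≤ (n - k : ℕ) := by exact_mod_cast hw
    have hz : z = 0 := by
      rcases lt_trichotomy z 0 with hz | hz | hz
      · exfalso
        have : z ≤ -1 := by omega
        have : z * ((n-k:ℕ):ℤ) ≤ -((n-k:ℕ):ℤ) := by nlinarith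
        have hb2' : ((b.2:ℤ)) < ((n-k:ℕ):ℤ) := by exact_mod_cast hb2
        have ha2' : (0:ℤ) ≤ (a.2:ℤ) := Int.natCast_nonneg _
        linarith
      · exact hz
      · exfalso
        have : 1 ≤ z := by omega
        have : ((n-k:ℕ):ℤ) ≤ z * ((n-k:ℕ):ℤ) := by nlinarith
        have ha2' : ((a.2:ℤ)) < ((n-k:ℕ):ℤ) := by exact_mod_cast ha2
        have hb2' : (0:ℤ) ≤ (b.2:ℤ) := Int.natCast_nonneg _
        linarith
    subst hz
    simp only [zero_mul, sub_zero, add_zero] at h1 h2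
    have e1 : a.1 = b.1 := by exact_mod_cast h2.symm
    have e2 : a.2 = b.2 := by exact_mod_cast h1.symm
    rw [Prod.ext_iff]; exact ⟨e1, e2⟩
  · rintro rfl; rfl

lemma colAdj_cases (hw : 0 < n - k) {p : ℕ → ℕ} (hp : ∀ r, p r ≤ n - k)
    {a b : ℕ × ℕ} (ha : a ∈ cells p) (hb : b ∈ cells p)
    (h : colAdj (n - k) k (toCyl n k a) (toCyl n k b)) : b = (a.1 + 1, a.2) := by
  obtain ⟨q, hq1, hq2⟩ := h
  rw [toCyl] at hq1
  have key := cmk_shift (n-k) k hq1.symm ((0 : ℤ), (1 : ℤ))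
  simp only [add_zero] at key
  rw [← hq2, toCyl] at key
  -- key : cmk (b.2, b.1) = cmk (a.2, a.1 + 1)
  rw [cmk_eq_iff] at key
  obtain ⟨z, h1, h2⟩ := key
  simp only [] at h1 h2
  -- h1 : a.2 = b.2 - z * (n-k), h2 : a.1 + 1 = b.1 + z * k
  have ha2 : a.2 < n - k := lt_of_lt_of_le ha (hp a.1)
  have hb2 : b.2 < n - k := lt_of_lt_of_le hb (hp b.1)
  have hu : (1:ℤ) ≤ ((n - k : ℕ):ℤ) := by exact_mod_cast hw
  have ha2' : ((a.2:ℤ)) < ((n-k:ℕ):ℤ) := by exact_mod_cast ha2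
  have hb2' : ((b.2:ℤ)) < ((n-k:ℕ):ℤ) := by exact_mod_cast hb2
  have ha2'' : (0:ℤ) ≤ (a.2:ℤ) := Int.natCast_nonneg _
  have hb2'' : (0:ℤ) ≤ (b.2:ℤ) := Int.natCast_nonneg _
  have hz : z = 0 := by
    rcases lt_trichotomy z 0 with hz | hz | hz
    · exfalso
      have hz1 : z ≤ -1 := by omega
      have : z * ((n-k:ℕ):ℤ) ≤ -((n-k:ℕ):ℤ) := by nlinarith
      linarith
    · exact hz
    · exfalso
      have hz1 : 1 ≤ z := by omega
      have : ((n-k:ℕ):ℤ) ≤ z * ((n-k:ℕ):ℤ) := by nlinarith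
      linarith
  subst hz
  simp only [zero_mul, sub_zero, add_zero] at h1 h2
  have e1 : a.2 = b.2 := by exact_mod_cast h1
  have e2 : a.1 + 1 = b.1 := by exact_mod_cast h2
  rw [Prod.ext_iff]
  exact ⟨e2.symm, e1.symm⟩

lemma rowAdj_cases (hw : 0 < n - k) {p : ℕ → ℕ} (hp : ∀ r, p r ≤ n - k)
    {a b : ℕ × ℕ} (ha : a ∈ cells p) (hb : b ∈ cells p)
    (h : rowAdj (n - k) k (toCyl n k a) (toCyl n k b)) :
    b = (a.1, a.2 + 1) ∨ (a.2 = n - k - 1 ∧ b = (a.1 + k, 0)) := by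
  obtain ⟨q, hq1, hq2⟩ := h
  rw [toCyl] at hq1
  have key := cmk_shift (n-k) k hq1.symm ((1 : ℤ), (0 : ℤ))
  simp only [add_zero] at key
  rw [← hq2, toCyl] at key
  rw [cmk_eq_iff] at key
  obtain ⟨z, h1, h2⟩ := key
  simp only [] at h1 h2
  -- h1 : a.2 + 1 = b.2 - z * (n-k), h2 : a.1 = b.1 + z * k
  have ha2 : a.2 < n - k := lt_of_lt_of_le ha (hp a.1)
  have hb2 : b.2 < n - k := lt_of_lt_of_le hb (hp b.1)
  have hu : (1:ℤ) ≤ ((n - k : ℕ):ℤ) := by exact_mod_cast hw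
  have ha2' : ((a.2:ℤ)) < ((n-k:ℕ):ℤ) := by exact_mod_cast ha2
  have hb2' : ((b.2:ℤ)) < ((n-k:ℕ):ℤ) := by exact_mod_cast hb2
  have ha2'' : (0:ℤ) ≤ (a.2:ℤ) := Int.natCast_nonneg _
  have hb2'' : (0:ℤ) ≤ (b.2:ℤ) := Int.natCast_nonneg _
  -- b.2 = a.2 + 1 + z * u, b.1 = a.1 - z * k
  have hz : z = 0 ∨ z = -1 := by
    rcases lt_trichotomy z (-1) with hz | hz | hz
    · exfalso
      have hz1 : z ≤ -2 := by omega
      have : z * ((n-k:ℕ):ℤ) ≤ -2 * ((n-k:ℕ):ℤ) := by nlinarith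
      linarith
    · exact Or.inr hz
    · rcases lt_trichotomy z 0 with hz0 | hz0 | hz0
      · omega
      · exact Or.inl hz0
      · exfalso
        have hz1 : 1 ≤ z := by omega
        have : ((n-k:ℕ):ℤ) ≤ z * ((n-k:ℕ):ℤ) := by nlinarith
        linarith
  rcases hz with rfl | rfl
  · simp only [zero_mul, sub_zero, add_zero] at h1 h2
    left
    have e1 : a.2 + 1 = b.2 := by exact_mod_cast h1
    have e2 : a.1 = b.1 := by exact_mod_cast h2
    rw [Prod.ext_iff]
    exact ⟨e2.symm, e1.symm⟩
  · right
    have e1 : (a.2:ℤ) + 1 = (b.2:ℤ) + ((n-k:ℕ):ℤ) := by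
      have := h1
      push_cast at this ⊢
      linarith
    have e2 : (a.1:ℤ) = (b.1:ℤ) - (k:ℤ) := by
      have := h2
      push_cast at this ⊢
      linarith
    have k1 : a.2 = n - k - 1 := by omega
    have k2 : b.2 = 0 := by omega
    have k3 : b.1 = a.1 + k := by omega
    refine ⟨k1, ?_⟩
    rw [Prod.ext_iff]
    exact ⟨k3, k2⟩

lemma colAdj_intro (r c : ℕ) : colAdj (n - k) k (toCyl n k (r, c)) (toCyl n k (r + 1, c)) := by
  refine ⟨((c : ℤ), (r : ℤ)), rfl, ?_⟩
  rw [toCyl]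
  congr 1


variable {n k : ℕ}

def Inv (n k : ℕ) (c : ℕ → ℕ) : Prop :=
  Antitone c ∧ (∀ i, n - k ≤ i → c i = 0) ∧ c 0 ≤ c (n - k - 1) + k

lemma conj_le_of_box {lam : ℕ → ℕ} (hlam : Antitone lam) (hk : lam k = 0) (j : ℕ) :
    conjPtn lam j ≤ k := by
  rw [conj_eq_ncard]
  have hsub : {i | j < lam i} ⊆ Set.Iio k := by
    intro i hi
    simp only [Set.mem_setOf_eq] at hi
    simp only [Set.mem_Iio]
    by_contra h
    have : lam i ≤ lam k := hlam (by omega)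
    omega
  have := Set.ncard_le_ncard hsub (Set.finite_Iio k)
  rwa [ncard_Iio] at this

lemma inv_base {lam : ℕ → ℕ} (hlam : IsPtn lam) (hbox : FitsBox lam k (n - k)) :
    Inv n k (conjPtn lam) := by
  have hvan : ∀ i, k ≤ i → lam i = 0 := by
    intro i hi
    have := hlam.1 hi
    rw [hbox.2] at this
    omega
  refine ⟨conj_antitone lam k hvan, ?_, ?_⟩
  · intro i hi
    exact conj_vanish lam hlam.1 i (le_trans hbox.1 hi)
  · calc conjPtn lam 0 ≤ k := conj_le_of_box hlam.1 hbox.2 0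
    _ ≤ conjPtn lam (n - k - 1) + k := by omega

lemma inv_step (hw : 0 < n - k) {c : ℕ → ℕ} (h : Inv n k c) :
    Inv n k (fullRibbonConjStep n k c) := by
  obtain ⟨hmono, hvan, h3⟩ := h
  refine ⟨?_, ?_, ?_⟩
  · intro i j hij
    unfold fullRibbonConjStep
    by_cases hj0 : j = 0
    · have hi0 : i = 0 := by omega
      rw [hi0, hj0]
    · rw [if_neg hj0]
      by_cases hjw : j < n - k
      · rw [if_pos hjw]
        by_cases hi0 : i = 0
        · rw [if_pos hi0]
          have hc1 : c (j-1) ≤ c 0 := hmono (Nat.zero_le _)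
          omega
        · rw [if_neg hi0, if_pos (by omega : i < n - k)]
          have := hmono (show i - 1 ≤ j - 1 by omega)
          omega
      · rw [if_neg hjw]
        omega
  · intro i hi
    unfold fullRibbonConjStep
    rw [if_neg (by omega : ¬ i = 0), if_neg (by omega : ¬ i < n - k)]
  · unfold fullRibbonConjStep
    rw [if_pos rfl]
    by_cases h0 : n - k - 1 = 0
    · rw [if_pos h0]
      omega
    · rw [if_neg h0, if_pos (by omega : n - k - 1 < n - k)]
      have := hmono (show n - k - 1 - 1 ≤ n - k - 1 by omega)
      omega

lemma inv_iter (hw : 0 < n - k) {lam : ℕ → ℕ} (hlam : IsPtn lam)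
    (hbox : FitsBox lam k (n - k)) (d : ℕ) :
    Inv n k ((fullRibbonConjStep n k)^[d] (conjPtn lam)) := by
  induction d with
  | zero => exact inv_base hlam hbox
  | succ d ih => rw [Function.iterate_succ_apply']; exact inv_step hw ih

lemma step_zero_ge (c : ℕ → ℕ) : k + 1 ≤ fullRibbonConjStep n k c 0 := by
  unfold fullRibbonConjStep
  simp

lemma step_inj {c1 c2 : ℕ → ℕ} (h1 : ∀ i, n - k ≤ i → c1 i = 0)
    (h2 : ∀ i, n - k ≤ i → c2 i = 0)
    (h : fullRibbonConjStep n k c1 = fullRibbonConjStep n k c2) : c1 = c2 := by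
  funext i
  have e0 := congrFun h 0
  have ei := congrFun h (i + 1)
  unfold fullRibbonConjStep at e0 ei
  rw [if_pos rfl, if_pos rfl] at e0
  by_cases hi : i + 1 < n - k
  · rw [if_neg (Nat.succ_ne_zero i), if_neg (Nat.succ_ne_zero i), if_pos hi, if_pos hi,
      Nat.add_sub_cancel] at ei
    omega
  · by_cases hi2 : i < n - k
    · have hieq : i = n - k - 1 := by omega
      rw [hieq]
      omega
    · rw [h1 i (by omega), h2 i (by omega)]

lemma peel {u1 u2 : ℕ → ℕ} (hs1 : ∀ d i, n - k ≤ i → (fullRibbonConjStep n k)^[d] u1 i = 0)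
    (hs2 : ∀ d i, n - k ≤ i → (fullRibbonConjStep n k)^[d] u2 i = 0) :
    ∀ d1 d2, d1 ≤ d2 → (fullRibbonConjStep n k)^[d1] u1 = (fullRibbonConjStep n k)^[d2] u2 →
      u1 = (fullRibbonConjStep n k)^[d2 - d1] u2 := by
  intro d1
  induction d1 with
  | zero => intro d2 _ h; simpa using h
  | succ d ih =>
    intro d2 hle h
    obtain ⟨e, rfl⟩ : ∃ e, d2 = e + 1 := ⟨d2 - 1, by omega⟩
    rw [Function.iterate_succ_apply', Function.iterate_succ_apply'] at h
    have := step_inj (hs1 d) (hs2 e) h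
    have hres := ih e (by omega) this
    convert hres using 2
    omega

lemma outer_inj (hw : 0 < n - k) {lam1 lam2 : ℕ → ℕ} {d1 d2 : ℕ}
    (h1 : IsPtn lam1) (hb1 : FitsBox lam1 k (n - k))
    (h2 : IsPtn lam2) (hb2 : FitsBox lam2 k (n - k))
    (h : outerShape n k d1 lam1 = outerShape n k d2 lam2) : lam1 = lam2 ∧ d1 = d2 := by
  set c1 := (fullRibbonConjStep n k)^[d1] (conjPtn lam1) with hc1
  set c2 := (fullRibbonConjStep n k)^[d2] (conjPtn lam2) with hc2
  have inv1 := inv_iter hw h1 hb1 d1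
  have inv2 := inv_iter hw h2 hb2 d2
  have hceq : c1 = c2 := by
    have := congrArg conjPtn h
    rwa [outerShape, outerShape, ← hc1, ← hc2,
      conj_conj c1 inv1.1 (n - k) inv1.2.1, conj_conj c2 inv2.1 (n - k) inv2.2.1] at this
  have hvan1 : ∀ i, k ≤ i → lam1 i = 0 := fun i hi => by
    have := h1.1 hi; rw [hb1.2] at this; omega
  have hvan2 : ∀ i, k ≤ i → lam2 i = 0 := fun i hi => by
    have := h2.1 hi; rw [hb2.2] at this; omega
  have key : ∀ (m1 m2 : ℕ → ℕ) (e1 e2 : ℕ), IsPtn m1 → FitsBox m1 k (n - k) →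
      IsPtn m2 → FitsBox m2 k (n - k) → e1 ≤ e2 →
      (fullRibbonConjStep n k)^[e1] (conjPtn m1) = (fullRibbonConjStep n k)^[e2] (conjPtn m2) →
      m1 = m2 ∧ e1 = e2 := by
    intro m1 m2 e1 e2 hm1 hbm1 hm2 hbm2 hle heq
    have hres := peel (fun d i hi => (inv_iter hw hm1 hbm1 d).2.1 i hi)
      (fun d i hi => (inv_iter hw hm2 hbm2 d).2.1 i hi) e1 e2 hle heq
    have he : e2 - e1 = 0 := by
      by_contra hne
      obtain ⟨e, hee⟩ : ∃ e, e2 - e1 = e + 1 := ⟨e2 - e1 - 1, by omega⟩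
      rw [hee, Function.iterate_succ_apply'] at hres
      have hge := step_zero_ge (n := n) (k := k) ((fullRibbonConjStep n k)^[e] (conjPtn m2))
      rw [← hres] at hge
      have hle' : conjPtn m1 0 ≤ k := conj_le_of_box hm1.1 hbm1.2 0
      omega
    rw [he] at hres
    simp only [Function.iterate_zero, id_eq] at hres
    have hmv1 : ∀ i, k ≤ i → m1 i = 0 := fun i hi => by
      have := hm1.1 hi; rw [hbm1.2] at this; omega
    have hmv2 : ∀ i, k ≤ i → m2 i = 0 := fun i hi => by
      have := hm2.1 hi; rw [hbm2.2] at this; omega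
    constructor
    · have := congrArg conjPtn hres
      rwa [conj_conj m1 hm1.1 k hmv1, conj_conj m2 hm2.1 k hmv2] at this
    · omega
  rcases Nat.le_total d1 d2 with hle | hle
  · exact key lam1 lam2 d1 d2 h1 hb1 h2 hb2 hle hceq
  · have := key lam2 lam1 d2 d1 h2 hb2 h1 hb1 hle hceq.symm
    exact ⟨this.1.symm, this.2.symm⟩

/-- basic properties of the outer shape -/
lemma outer_props (hw : 0 < n - k) {lam : ℕ → ℕ} (hlam : IsPtn lam)
    (hbox : FitsBox lam k (n - k)) (d : ℕ) :
    Antitone (outerShape n k d lam) ∧ (∀ v, outerShape n k d lam v ≤ n - k) ∧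
    (∀ v, ((fullRibbonConjStep n k)^[d] (conjPtn lam)) 0 ≤ v → outerShape n k d lam v = 0) := by
  set c := (fullRibbonConjStep n k)^[d] (conjPtn lam) with hc
  have inv := inv_iter hw hlam hbox d
  refine ⟨conj_antitone c (n - k) inv.2.1, ?_, ?_⟩
  · intro v
    rw [outerShape, ← hc, conj_eq_ncard]
    have hsub : {i | v < c i} ⊆ Set.Iio (n - k) := by
      intro i hi
      simp only [Set.mem_setOf_eq] at hi
      simp only [Set.mem_Iio]
      by_contra hni
      have hz := inv.2.1 i (by omega)
      rw [← hc] at hz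
      rw [hz] at hi
      omega
    have := Set.ncard_le_ncard hsub (Set.finite_Iio _)
    rwa [ncard_Iio] at this
  · intro v hv
    exact conj_vanish c inv.1 v hv


section Tableaux

variable {n k : ℕ} (hw : 0 < n - k) (p : ℕ → ℕ) (hmono : Antitone p)
  (hble : ∀ v, p v ≤ n - k)

include hw hmono hble

lemma toCyl_injOn : Set.InjOn (toCyl n k) (cells p) :=
  fun a ha b hb h => (toCyl_eq_iff hw hble ha hb).1 h

/-- transfer of fibers from the cylinder to the plane -/
lemma fiber_transfer (T : Cyl (n - k) k → ℕ) (v : ℕ) :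
    {x | x ∈ toCyl n k '' cells p ∧ T x = v}.ncard
      = {a | a ∈ cells p ∧ T (toCyl n k a) = v}.ncard := by
  have himg : {x | x ∈ toCyl n k '' cells p ∧ T x = v}
      = toCyl n k '' {a | a ∈ cells p ∧ T (toCyl n k a) = v} := by
    ext x
    simp only [Set.mem_setOf_eq, Set.mem_image]
    constructor
    · rintro ⟨⟨a, ha, rfl⟩, hv⟩
      exact ⟨a, ⟨ha, hv⟩, rfl⟩
    · rintro ⟨a, ⟨ha, hv⟩, rfl⟩
      exact ⟨⟨a, ha, rfl⟩, hv⟩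
  rw [himg, Set.ncard_image_of_injOn ((toCyl_injOn hw p hmono hble).mono (fun a ha => ha.1))]

/-- in a cylindric SSYT, entries are at least the row index -/
lemma row_lower_bound (T : Cyl (n - k) k → ℕ)
    (hok : CylOk (n - k) k (toCyl n k '' cells p) T) :
    ∀ a ∈ cells p, a.1 ≤ T (toCyl n k a) := by
  rintro ⟨r, c⟩ ha
  induction r with
  | zero => exact Nat.zero_le _
  | succ r ih =>
    have hprev : ((r, c) : ℕ × ℕ) ∈ cells p := by
      simp only [cells, Set.mem_setOf_eq] at ha ⊢
      exact lt_of_lt_of_le ha (hmono (Nat.le_succ r))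
    have hlt := hok.2 (toCyl n k (r, c)) (toCyl n k (r + 1, c))
      (Set.mem_image_of_mem _ hprev) (Set.mem_image_of_mem _ ha) (colAdj_intro r c)
    have := ih hprev
    omega

/-- partial-sum comparison (dominance-type inequality) for contents of cylindric SSYT -/
lemma content_dominance (T : Cyl (n - k) k → ℕ)
    (hok : CylOk (n - k) k (toCyl n k '' cells p) T)
    (hfin : (cells p).Finite) (e : ℕ → ℕ)
    (hcont : ∀ v, {x | x ∈ toCyl n k '' cells p ∧ T x = v}.ncard = e v) (v : ℕ) :
    ∑ w ∈ Finset.range (v+1), e w ≤ ∑ w ∈ Finset.range (v+1), p w := by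
  have hfib : ∀ u, {a | a ∈ cells p ∧ T (toCyl n k a) = u}.ncard = e u :=
    fun u => by rw [← fiber_transfer hw p hmono hble T u]; exact hcont u
  rw [← sum_fiber_le (cells p) hfin (fun a => T (toCyl n k a)) e hfib v,
    ← cells_partial p hfin v]
  refine Set.ncard_le_ncard ?_ (hfin.subset (fun a ha => ha.1))
  intro a ⟨ha, hv⟩
  exact ⟨ha, le_trans (row_lower_bound hw p hmono hble T hok a ha) hv⟩

/-- total content equals the number of cells -/
lemma content_total (T : Cyl (n - k) k → ℕ)
    (hfin : (cells p).Finite) (e : ℕ → ℕ)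
    (hcont : ∀ v, {x | x ∈ toCyl n k '' cells p ∧ T x = v}.ncard = e v)
    (M : ℕ) (hM : ∀ w, M ≤ w → e w = 0) :
    (cells p).ncard = ∑ w ∈ Finset.range (M+1), e w := by
  have hfib : ∀ u, {a | a ∈ cells p ∧ T (toCyl n k a) = u}.ncard = e u :=
    fun u => by rw [← fiber_transfer hw p hmono hble T u]; exact hcont u
  refine ncard_eq_sum_fiber (cells p) hfin (fun a => T (toCyl n k a)) e hfib M ?_
  intro a ha
  show T (toCyl n k a) ≤ M
  by_contra hgt
  have hzero : e (T (toCyl n k a)) = 0 := hM _ (by omega)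
  have := hfib (T (toCyl n k a))
  rw [hzero, Set.ncard_eq_zero (hfin.subset (fun x hx => hx.1))] at this
  exact absurd this (Set.nonempty_iff_ne_empty.1 ⟨a, ha, rfl⟩)

/-- rigidity: if the content equals the row lengths, every entry equals its row index -/
lemma rigidity (T : Cyl (n - k) k → ℕ)
    (hok : CylOk (n - k) k (toCyl n k '' cells p) T)
    (hfin : (cells p).Finite)
    (hcont : ∀ v, {x | x ∈ toCyl n k '' cells p ∧ T x = v}.ncard = p v) :
    ∀ a ∈ cells p, T (toCyl n k a) = a.1 := by
  have hfib : ∀ u, {a | a ∈ cells p ∧ T (toCyl n k a) = u}.ncard = p u :=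
    fun u => by rw [← fiber_transfer hw p hmono hble T u]; exact hcont u
  have hsets : ∀ v, {a | a ∈ cells p ∧ T (toCyl n k a) ≤ v} = {a | a ∈ cells p ∧ a.1 ≤ v} := by
    intro v
    refine Set.eq_of_subset_of_ncard_le ?_ ?_ (hfin.subset (fun a ha => ha.1))
    · intro a ⟨ha, hv⟩
      exact ⟨ha, le_trans (row_lower_bound hw p hmono hble T hok a ha) hv⟩
    · rw [sum_fiber_le (cells p) hfin (fun a => T (toCyl n k a)) p hfib v,
        cells_partial p hfin v]
  intro a ha
  have h1 := row_lower_bound hw p hmono hble T hok a ha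
  have h2 : a ∈ {b | b ∈ cells p ∧ T (toCyl n k b) ≤ a.1} := by
    rw [hsets a.1]
    exact ⟨ha, le_refl _⟩
  have := h2.2
  omega

/-- the canonical (row) filling -/
def canonT (n k : ℕ) (p : ℕ → ℕ) : Cyl (n - k) k → ℕ := fun x =>
  if h : ∃ a, a ∈ cells p ∧ toCyl n k a = x then h.choose.1 else 0

lemma canonT_spec (a : ℕ × ℕ) (ha : a ∈ cells p) : canonT n k p (toCyl n k a) = a.1 := by
  rw [canonT]
  have h : ∃ b, b ∈ cells p ∧ toCyl n k b = toCyl n k a := ⟨a, ha, rfl⟩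
  rw [dif_pos h]
  have hspec := h.choose_spec
  have := (toCyl_eq_iff hw hble hspec.1 ha).1 hspec.2
  rw [this]

lemma canonT_valid (hfin : (cells p).Finite) :
    CylOk (n - k) k (toCyl n k '' cells p) (canonT n k p) ∧
    (∀ x, x ∉ toCyl n k '' cells p → canonT n k p x = 0) ∧
    ∀ v, {x | x ∈ toCyl n k '' cells p ∧ canonT n k p x = v}.ncard = p v := by
  refine ⟨⟨?_, ?_⟩, ?_, ?_⟩
  · rintro x y ⟨a, ha, rfl⟩ ⟨b, hb, rfl⟩ hadj
    rw [canonT_spec hw p hmono hble a ha, canonT_spec hw p hmono hble b hb]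
    rcases rowAdj_cases hw hble ha hb hadj with h | ⟨_, h⟩ <;> rw [h] <;> simp <;> omega
  · rintro x y ⟨a, ha, rfl⟩ ⟨b, hb, rfl⟩ hadj
    rw [canonT_spec hw p hmono hble a ha, canonT_spec hw p hmono hble b hb]
    have := colAdj_cases hw hble ha hb hadj
    rw [this]
    simp
  · intro x hx
    rw [canonT, dif_neg]
    rintro ⟨a, ha, rfl⟩
    exact hx (Set.mem_image_of_mem _ ha)
  · intro v
    rw [fiber_transfer hw p hmono hble]
    rw [← row_fiber p v]
    congr 1
    ext a
    simp only [Set.mem_setOf_eq]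
    constructor
    · rintro ⟨ha, hv⟩
      rw [canonT_spec hw p hmono hble a ha] at hv
      exact ⟨ha, hv⟩
    · rintro ⟨ha, hv⟩
      exact ⟨ha, by rw [canonT_spec hw p hmono hble a ha]; exact hv⟩

end Tableaux

lemma card_subtype_fiber {X : Type} (S : Set X) (T : X → ℕ) (v : ℕ) :
    Nat.card {x : X // x ∈ S ∧ T x = v} = {x | x ∈ S ∧ T x = v}.ncard :=
  Nat.card_coe_set_eq _

section Main
variable {n k : ℕ} (hw : 0 < n - k) (p : ℕ → ℕ) (hmono : Antitone p)
  (hble : ∀ v, p v ≤ n - k)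
include hw hmono hble

lemma diag_count (hfin : (cells p).Finite) (e : ℕ →₀ ℕ) (he : ∀ v, e v = p v) :
    Nat.card {T : Cyl (n - k) k → ℕ //
      CylOk (n - k) k (toCyl n k '' cells p) T ∧
      (∀ x, x ∉ toCyl n k '' cells p → T x = 0) ∧
      ∀ v, Nat.card {x : Cyl (n - k) k // x ∈ toCyl n k '' cells p ∧ T x = v} = e v} = 1 := by
  rw [Nat.card_eq_one_iff_unique]
  refine ⟨⟨?_⟩, ?_⟩
  · rintro ⟨T1, h1, h1z, h1c⟩ ⟨T2, h2, h2z, h2c⟩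
    have k1 := rigidity hw p hmono hble T1 h1 hfin (fun v =>
      (card_subtype_fiber _ _ _).symm.trans ((h1c v).trans (he v)))
    have k2 := rigidity hw p hmono hble T2 h2 hfin (fun v =>
      (card_subtype_fiber _ _ _).symm.trans ((h2c v).trans (he v)))
    apply Subtype.ext
    funext x
    by_cases hx : x ∈ toCyl n k '' cells p
    · obtain ⟨a, ha, rfl⟩ := hx
      show T1 (toCyl n k a) = T2 (toCyl n k a)
      rw [k1 a ha, k2 a ha]
    · show T1 x = T2 x
      rw [h1z x hx, h2z x hx]
  · obtain ⟨hok, hz, hcont⟩ := canonT_valid hw p hmono hble hfin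
    exact ⟨⟨canonT n k p, hok, hz,
      fun v => (card_subtype_fiber _ _ _).trans ((hcont v).trans (he v).symm)⟩⟩

end Main

end Aux

/-- For fixed `k` and `n-k`, the cylindric Schur functions `s_{λ/d/∅}(x)`, over all cylindric
shapes `λ/d/∅ ⊆ C_{k,n-k}`, are linearly independent. -/


theorem stmt15 (n k : ℕ) (hk : 0 < k) (hkn : k < n) :
    LinearIndependent ℚ
      (fun q : {q : (ℕ → ℕ) × ℕ // IsPtn q.1 ∧ FitsBox q.1 k (n - k)} =>
        cylSchur (n - k) k (ldmShape n k q.1.2 q.1.1 (fun _ => 0))) := by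
  have hw : 0 < n - k := by omega
  rw [linearIndependent_iff']
  set ι := {q : (ℕ → ℕ) × ℕ // IsPtn q.1 ∧ FitsBox q.1 k (n - k)} with hι
  set Lam : ι → ℕ → ℕ := fun r => outerShape n k r.1.2 r.1.1 with hLamdef
  set Bq : ι → ℕ := fun r => ((fullRibbonConjStep n k)^[r.1.2] (conjPtn r.1.1)) 0 with hBqdef
  have hprops : ∀ r : ι, Antitone (Lam r) ∧ (∀ v, Lam r v ≤ n - k) ∧
      ∀ v, Bq r ≤ v → Lam r v = 0 := fun r =>
    Aux.outer_props hw r.2.1 r.2.2 r.1.2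
  have hfinr : ∀ r : ι, (cells (Lam r)).Finite := fun r =>
    Aux.cells_finite (Lam r) (Bq r + (n - k))
      (fun i hi => (hprops r).2.2 i (by omega))
      (fun i => le_trans ((hprops r).2.1 i) (by omega))
  have hshape : ∀ r : ι, ldmShape n k r.1.2 r.1.1 (fun _ => 0) = toCyl n k '' cells (Lam r) := by
    intro r
    rw [ldmShape]
    congr 1
    ext a
    simp [cells, hLamdef]
  suffices H : ∀ (m : ℕ) (s : Finset ι) (g : ι → ℚ), s.card ≤ m →
      ∑ q ∈ s, g q • cylSchur (n - k) k (ldmShape n k q.1.2 q.1.1 (fun _ => 0)) = 0 →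
      ∀ q ∈ s, g q = 0 by
    intro s g hs q hq
    exact H s.card s g le_rfl hs q hq
  intro m
  induction m with
  | zero =>
    intro s g hcard _ q hq
    rw [Nat.le_zero, Finset.card_eq_zero] at hcard
    subst hcard
    exact absurd hq (Finset.notMem_empty q)
  | succ m ih =>
    intro s g hcard hsum q hq
    have hne : s.Nonempty := ⟨q, hq⟩
    set M : ℕ := s.sup Bq with hMdef
    obtain ⟨q0, hq0s, hq0max⟩ := Finset.exists_max_image s
      (fun r => ∑ v ∈ Finset.range (M+1), ∑ w ∈ Finset.range (v+1), Lam r w) hne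
    set e : ℕ →₀ ℕ := Finsupp.onFinset (Finset.range (Bq q0)) (Lam q0)
      (fun a ha => Finset.mem_range.2 (by
        by_contra hc
        exact ha ((hprops q0).2.2 a (by omega)))) with hedef
    have he : ∀ v, e v = Lam q0 v := fun v => rfl
    -- the coefficient of each cylindric Schur function at `e`
    have hcv : ∀ r : ι, MvPowerSeries.coeff e
        (cylSchur (n - k) k (ldmShape n k r.1.2 r.1.1 (fun _ => 0)))
        = (Nat.card {T : Cyl (n - k) k → ℕ //
            CylOk (n - k) k (toCyl n k '' cells (Lam r)) T ∧
            (∀ x, x ∉ toCyl n k '' cells (Lam r) → T x = 0) ∧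
            ∀ v, Nat.card {x : Cyl (n - k) k //
              x ∈ toCyl n k '' cells (Lam r) ∧ T x = v} = e v} : ℚ) := by
      intro r
      rw [hshape r]
      rfl
    -- off-diagonal coefficients vanish
    have hoff : ∀ r ∈ s, r ≠ q0 →
        Nat.card {T : Cyl (n - k) k → ℕ //
            CylOk (n - k) k (toCyl n k '' cells (Lam r)) T ∧
            (∀ x, x ∉ toCyl n k '' cells (Lam r) → T x = 0) ∧
            ∀ v, Nat.card {x : Cyl (n - k) k //
              x ∈ toCyl n k '' cells (Lam r) ∧ T x = v} = e v} = 0 := by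
      intro r hrs hrne
      have : IsEmpty {T : Cyl (n - k) k → ℕ //
            CylOk (n - k) k (toCyl n k '' cells (Lam r)) T ∧
            (∀ x, x ∉ toCyl n k '' cells (Lam r) → T x = 0) ∧
            ∀ v, Nat.card {x : Cyl (n - k) k //
              x ∈ toCyl n k '' cells (Lam r) ∧ T x = v} = e v} := by
        constructor
        rintro ⟨T, hok, hz, hcont⟩
        have hcont' : ∀ v, {x | x ∈ toCyl n k '' cells (Lam r) ∧ T x = v}.ncard = e v :=
          fun v => (Aux.card_subtype_fiber _ _ _).symm.trans (hcont v)
        have hBq0M : Bq q0 ≤ M := Finset.le_sup hq0s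
        have hBrM : Bq r ≤ M := Finset.le_sup hrs
        have hdom : ∀ v, ∑ w ∈ Finset.range (v+1), e w ≤ ∑ w ∈ Finset.range (v+1), Lam r w :=
          Aux.content_dominance hw (Lam r) (hprops r).1 (hprops r).2.1 T hok (hfinr r)
            (fun w => e w) hcont'
        have htot : (cells (Lam r)).ncard = ∑ w ∈ Finset.range (M+1), e w :=
          Aux.content_total hw (Lam r) (hprops r).1 (hprops r).2.1 T (hfinr r)
            (fun w => e w) hcont' M
            (fun w hwge => by show e w = 0; rw [he w]; exact (hprops q0).2.2 w (by omega))
        have hcells : (cells (Lam r)).ncard = ∑ w ∈ Finset.range (M+1), Lam r w :=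
          Aux.cells_total (Lam r) (hfinr r) M (fun i hi => (hprops r).2.2 i (by omega))
        have hsum_eq : ∑ w ∈ Finset.range (M+1), e w = ∑ w ∈ Finset.range (M+1), Lam r w := by
          rw [← htot, hcells]
        -- compare the maximality functional
        have hle1 : ∀ v ∈ Finset.range (M+1),
            ∑ w ∈ Finset.range (v+1), Lam q0 w ≤ ∑ w ∈ Finset.range (v+1), Lam r w := by
          intro v _
          calc ∑ w ∈ Finset.range (v+1), Lam q0 w
              = ∑ w ∈ Finset.range (v+1), e w := by
                refine Finset.sum_congr rfl (fun w _ => (he w).symm)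
            _ ≤ ∑ w ∈ Finset.range (v+1), Lam r w := hdom v
        have hFle : (∑ v ∈ Finset.range (M+1), ∑ w ∈ Finset.range (v+1), Lam r w)
            ≤ ∑ v ∈ Finset.range (M+1), ∑ w ∈ Finset.range (v+1), Lam q0 w := hq0max r hrs
        have hFeq : (∑ v ∈ Finset.range (M+1), ∑ w ∈ Finset.range (v+1), Lam q0 w)
            = ∑ v ∈ Finset.range (M+1), ∑ w ∈ Finset.range (v+1), Lam r w :=
          le_antisymm (Finset.sum_le_sum hle1) hFle
        have hterm := (Finset.sum_eq_sum_iff_of_le hle1).1 hFeq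
        -- deduce that the shapes coincide
        have hpt : Lam q0 = Lam r := by
          funext w0
          by_cases hwM : w0 ≤ M
          · rcases Nat.eq_zero_or_pos w0 with rfl | hpos
            · have h0 := hterm 0 (Finset.mem_range.2 (by omega))
              simpa using h0
            · obtain ⟨u, rfl⟩ : ∃ u, w0 = u + 1 := ⟨w0 - 1, by omega⟩
              have h1 := hterm (u+1) (Finset.mem_range.2 (by omega))
              have h2 := hterm u (Finset.mem_range.2 (by omega))
              rw [Finset.sum_range_succ, Finset.sum_range_succ (f := Lam r)] at h1
              omega
          · rw [(hprops q0).2.2 w0 (by omega), (hprops r).2.2 w0 (by omega)]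
        have := Aux.outer_inj hw q0.2.1 q0.2.2 r.2.1 r.2.2 hpt
        exact hrne (Subtype.ext (Prod.ext this.1.symm this.2.symm))
      exact @Nat.card_of_isEmpty _ this
    -- extract the coefficient at `e` from the linear relation
    have hco : ∑ r ∈ s, g r * MvPowerSeries.coeff e
        (cylSchur (n - k) k (ldmShape n k r.1.2 r.1.1 (fun _ => 0))) = 0 := by
      have := congrArg (MvPowerSeries.coeff e) hsum
      rw [map_sum, map_zero] at this
      simpa [smul_eq_mul] using this
    have hdiag : MvPowerSeries.coeff e
        (cylSchur (n - k) k (ldmShape n k q0.1.2 q0.1.1 (fun _ => 0))) = 1 := by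
      rw [hcv q0]
      rw [Aux.diag_count hw (Lam q0) (hprops q0).1 (hprops q0).2.1 (hfinr q0) e he]
      norm_num
    have hg0 : g q0 = 0 := by
      rw [Finset.sum_eq_single_of_mem q0 hq0s (fun b hbs hbne => by
        rw [hcv b, hoff b hbs hbne]
        norm_num)] at hco
      rw [hdiag, mul_one] at hco
      exact hco
    -- recurse on the remaining terms
    have hsum' : ∑ r ∈ s.erase q0, g r •
        cylSchur (n - k) k (ldmShape n k r.1.2 r.1.1 (fun _ => 0)) = 0 := by
      rw [Finset.sum_erase_eq_sub hq0s, hsum, hg0, zero_smul, sub_zero]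
    have hcard' : (s.erase q0).card ≤ m := by
      have := Finset.card_erase_of_mem hq0s
      omega
    by_cases hqq0 : q = q0
    · rw [hqq0]; exact hg0
    · exact ih (s.erase q0) g hcard' hsum' q (Finset.mem_erase.2 ⟨hqq0, hq⟩)
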